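/- Let 1 ≤ p < ∞ and let B_u, B_v be the weighted backward shifts on X = ℓ_p(ℤ₊) associated with weight sequences u and v which are bounded below, i.e. inf_{n≥1} |u_n| > 0 and inf_{n≥1} |v_n| > 0. If B_u and B_v are not similar, i.e. if either liminf_{n→∞} |u₁⋯u_n / (v₁⋯v_n)| = 0 or limsup_{n→∞} |u₁⋯u_n / (v₁⋯v_n)| = ∞, then B_u and B_v are orthogonal: for any Borel probability measures m_u, m_v on X with m_u B_u-invariant, m_v B_v-invariant and m_u({0}) = 0 = m_v({0}), the measures m_u and m_v are mutually singular. -/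

import Mathlib

open MeasureTheory Filter Topology
open scoped ENNReal NNReal

noncomputable instance {𝕂 : Type*} [RCLike 𝕂] {p : ℝ≥0∞} [Fact (1 ≤ p)] :
    MeasurableSpace (lp (fun _ : ℕ => 𝕂) p) := borel _

instance {𝕂 : Type*} [RCLike 𝕂] {p : ℝ≥0∞} [Fact (1 ≤ p)] :
    BorelSpace (lp (fun _ : ℕ => 𝕂) p) := ⟨rfl⟩


namespace OrthoShift

lemma helper_ineq (δ R t a b eu ev Pu Pv bju bjv d D C : ℝ)
    (hδ : 0 < δ) (hR : 0 < R) (ht : 0 ≤ t) (ha : 0 < a) (hb : 0 < b)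
    (hbju : 0 < bju) (hbjv : 0 < bjv)
    (hdle : d ≤ bju) (hDle : bjv ≤ D) (hC : 0 < C)
    (hCe : eu ≤ C * ev)
    (hPu : bju * Pu = a * eu) (hPv : bjv * Pv = b * ev)
    (hsm : a * (R * C * D) ≤ b * (δ * d))
    (hyp : δ ≤ Pu * t) :
    R ≤ Pv * t := by
  have h1 : δ * d ≤ a * eu * t := by
    nlinarith [mul_le_mul_of_nonneg_left hyp hbju.le, mul_le_mul_of_nonneg_left hdle hδ.le]
  have h4 : a * eu * t ≤ a * C * ev * t := by
    nlinarith [mul_le_mul_of_nonneg_left hCe ha.le]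
  have h2 : (a * C) * (R * D) ≤ (a * C) * (b * (ev * t)) := by
    nlinarith [mul_le_mul_of_nonneg_left h1 hb.le, mul_le_mul_of_nonneg_left h4 hb.le]
  have h5 : R * D ≤ b * (ev * t) := le_of_mul_le_mul_left h2 (by positivity)
  have h6 : bjv * R ≤ bjv * (Pv * t) := by
    nlinarith [mul_le_mul_of_nonneg_left hDle hR.le]
  exact le_of_mul_le_mul_left h6 hbjv

variable {𝕂 : Type*} [RCLike 𝕂] {p : ℝ≥0∞} [Fact (1 ≤ p)]

lemma p_ne_zero' : p ≠ 0 := (lt_of_lt_of_le zero_lt_one (Fact.out : 1 ≤ p)).ne'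

lemma coord_continuous (j : ℕ) :
    Continuous fun x : lp (fun _ : ℕ => 𝕂) p => (x : ∀ _ : ℕ, 𝕂) j := by
  refine (LipschitzWith.of_dist_le_mul (K := 1) ?_).continuous
  intro x y
  rw [NNReal.coe_one, one_mul, dist_eq_norm, dist_eq_norm]
  have h : (x : ∀ _ : ℕ, 𝕂) j - (y : ∀ _ : ℕ, 𝕂) j
      = ((x - y : lp (fun _ : ℕ => 𝕂) p) : ∀ _ : ℕ, 𝕂) j := by
    rw [lp.coeFn_sub]; rfl
  rw [h]
  exact lp.norm_apply_le_norm p_ne_zero' _ j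

lemma meas_H (N : ℕ) (c : ℝ) :
    MeasurableSet {y : lp (fun _ : ℕ => 𝕂) p | ∃ j ≤ N, c ≤ ‖(y : ∀ _ : ℕ, 𝕂) j‖} := by
  have h : {y : lp (fun _ : ℕ => 𝕂) p | ∃ j ≤ N, c ≤ ‖(y : ∀ _ : ℕ, 𝕂) j‖}
      = ⋃ j, ⋃ (_ : j ≤ N), {y : lp (fun _ : ℕ => 𝕂) p | c ≤ ‖(y : ∀ _ : ℕ, 𝕂) j‖} := by
    ext y; simp
  rw [h]
  exact .iUnion fun j => .iUnion fun _ =>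
    measurableSet_le measurable_const ((coord_continuous j).norm.measurable)

lemma inv_pow_meas {T : lp (fun _ : ℕ => 𝕂) p →L[𝕂] lp (fun _ : ℕ => 𝕂) p}
    {m : Measure (lp (fun _ : ℕ => 𝕂) p)}
    (hinv : ∀ A, MeasurableSet A → m (T ⁻¹' A) = m A) (k : ℕ)
    {A : Set (lp (fun _ : ℕ => 𝕂) p)} (hA : MeasurableSet A) :
    m ((T ^ k) ⁻¹' A) = m A := by
  induction k with
  | zero => simp [Set.preimage]
  | succ k ih =>
      have h1 : ((T ^ (k+1)) : lp (fun _ : ℕ => 𝕂) p →L[𝕂] _) ⁻¹' A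
          = T ⁻¹' ((T ^ k) ⁻¹' A) := by
        rw [pow_succ]
        ext x
        simp [ContinuousLinearMap.mul_apply, Set.mem_preimage]
      rw [h1, hinv _ ((T ^ k).continuous.measurable hA), ih]

lemma pow_apply_coord (u : ℕ → 𝕂) (Bu : lp (fun _ : ℕ => 𝕂) p →L[𝕂] lp (fun _ : ℕ => 𝕂) p)
    (hBu : ∀ (x : lp (fun _ : ℕ => 𝕂) p) (n : ℕ),
        (Bu x : ∀ _ : ℕ, 𝕂) n = u (n + 1) * (x : ∀ _ : ℕ, 𝕂) (n + 1))
    (k : ℕ) (x : lp (fun _ : ℕ => 𝕂) p) (n : ℕ) :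
    ((Bu ^ k) x : ∀ _ : ℕ, 𝕂) n
      = (∏ i ∈ Finset.Ioc n (n + k), u i) * (x : ∀ _ : ℕ, 𝕂) (n + k) := by
  induction k generalizing x n with
  | zero => simp
  | succ k ih =>
      have h1 : ((Bu ^ (k+1)) x : ∀ _ : ℕ, 𝕂) n = ((Bu ^ k) (Bu x) : ∀ _ : ℕ, 𝕂) n := by
        rw [pow_succ]
        rfl
      have h2 : n + (k+1) = (n + k) + 1 := rfl
      rw [h1, ih, hBu, h2, Finset.prod_Ioc_succ_top (Nat.le_add_right n k)]
      ring

set_option maxHeartbeats 1000000 in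
set_option synthInstance.maxHeartbeats 1000000 in
theorem aux (u v : ℕ → 𝕂) (hu0 : ∀ n, 1 ≤ n → u n ≠ 0) (hv0 : ∀ n, 1 ≤ n → v n ≠ 0)
    (hubdd : ∃ M : ℝ, ∀ n, ‖u n‖ ≤ M)
    (hvbelow : ∃ c : ℝ, 0 < c ∧ ∀ n, 1 ≤ n → c ≤ ‖v n‖)
    (Bu Bv : lp (fun _ : ℕ => 𝕂) p →L[𝕂] lp (fun _ : ℕ => 𝕂) p)
    (hBu : ∀ (x : lp (fun _ : ℕ => 𝕂) p) (n : ℕ),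
        (Bu x : ∀ _ : ℕ, 𝕂) n = u (n + 1) * (x : ∀ _ : ℕ, 𝕂) (n + 1))
    (hBv : ∀ (x : lp (fun _ : ℕ => 𝕂) p) (n : ℕ),
        (Bv x : ∀ _ : ℕ, 𝕂) n = v (n + 1) * (x : ∀ _ : ℕ, 𝕂) (n + 1))
    (hsmall : ∀ ε : ℝ, 0 < ε → ∃ n,
        ‖∏ i ∈ Finset.Ioc 0 n, u i‖ < ε * ‖∏ i ∈ Finset.Ioc 0 n, v i‖)
    (mu mv : Measure (lp (fun _ : ℕ => 𝕂) p))
    [IsProbabilityMeasure mu] [IsProbabilityMeasure mv]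
    (hmu : ∀ A : Set (lp (fun _ : ℕ => 𝕂) p), MeasurableSet A → mu (Bu ⁻¹' A) = mu A)
    (hmv : ∀ A : Set (lp (fun _ : ℕ => 𝕂) p), MeasurableSet A → mv (Bv ⁻¹' A) = mv A)
    (hzero_u : mu {0} = 0) :
    mu.MutuallySingular mv := by
  haveI : MeasurableSingletonClass (lp (fun _ : ℕ => 𝕂) p) :=
    ⟨fun a => isClosed_singleton.measurableSet⟩
  have hβu_pos : ∀ n, (0:ℝ) < ‖∏ i ∈ Finset.Ioc 0 n, u i‖ := by
    intro n
    rw [norm_pos_iff]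
    exact Finset.prod_ne_zero_iff.mpr fun i hi => hu0 i (Finset.mem_Ioc.mp hi).1
  have hβv_pos : ∀ n, (0:ℝ) < ‖∏ i ∈ Finset.Ioc 0 n, v i‖ := by
    intro n
    rw [norm_pos_iff]
    exact Finset.prod_ne_zero_iff.mpr fun i hi => hv0 i (Finset.mem_Ioc.mp hi).1
  obtain ⟨M₀, hM₀⟩ := hubdd
  set Mu : ℝ := max M₀ 1 with hMudef
  have hMu1 : (1:ℝ) ≤ Mu := le_max_right _ _
  have hMu : ∀ n, ‖u n‖ ≤ Mu := fun n => (hM₀ n).trans (le_max_left _ _)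
  have hMu0 : (0:ℝ) < Mu := lt_of_lt_of_le one_pos hMu1
  obtain ⟨cv, hcv0, hcv⟩ := hvbelow
  -- main claim
  have key : ∀ ε : ℝ≥0∞, 0 < ε → ε < 1 → ∃ A : Set (lp (fun _ : ℕ => 𝕂) p),
      MeasurableSet A ∧ 1 - ε ≤ mu A ∧ mv A = 0 := by
    intro ε hε hε1
    -- choose N
    set g : ℕ → Set (lp (fun _ : ℕ => 𝕂) p) :=
      fun m => {x | ∃ j ≤ m, 1/((m:ℝ)+1) ≤ ‖(x : ∀ _ : ℕ, 𝕂) j‖} with hgdef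
    have hg_meas : ∀ m, MeasurableSet (g m) := fun m => meas_H m _
    have hg_mono : Monotone g := by
      intro m m' hmm' x hx
      obtain ⟨j, hj, hx⟩ := hx
      refine ⟨j, hj.trans hmm', le_trans ?_ hx⟩
      apply one_div_le_one_div_of_le (by positivity)
      have : (m:ℝ) ≤ (m':ℝ) := Nat.cast_le.mpr hmm'
      linarith
    have hg_union : (⋃ m, g m) = {(0 : lp (fun _ : ℕ => 𝕂) p)}ᶜ := by
      ext x
      simp only [Set.mem_iUnion, Set.mem_compl_iff, Set.mem_singleton_iff, hgdef,
        Set.mem_setOf_eq]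
      constructor
      · rintro ⟨m, j, hj, hle⟩ rfl
        have h0 : ((0 : lp (fun _ : ℕ => 𝕂) p) : ∀ _ : ℕ, 𝕂) j = 0 := by
          rw [lp.coeFn_zero]; rfl
        rw [h0, norm_zero] at hle
        have : (0:ℝ) < 1/((m:ℝ)+1) := by positivity
        linarith
      · intro hx
        have hxj : ∃ j, (x : ∀ _ : ℕ, 𝕂) j ≠ 0 := by
          by_contra hall
          push_neg at hall
          exact hx (lp.ext (funext fun j => by simpa using hall j))
        obtain ⟨j, hj⟩ := hxj
        have ht0 : (0:ℝ) < ‖(x : ∀ _ : ℕ, 𝕂) j‖ := norm_pos_iff.mpr hj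
        obtain ⟨M₁, hM₁⟩ := exists_nat_ge (1/‖(x : ∀ _ : ℕ, 𝕂) j‖)
        refine ⟨max j M₁, j, le_max_left _ _, ?_⟩
        rw [div_le_iff₀ (by positivity)]
        have h1 : (1:ℝ) ≤ ‖(x : ∀ _ : ℕ, 𝕂) j‖ * ((M₁:ℝ)+1) := by
          have := (div_le_iff₀ ht0).mp (hM₁.trans (by norm_num : (M₁:ℝ) ≤ (M₁:ℝ)+1))
          linarith [this]
        have h2 : ((M₁:ℝ)+1) ≤ ((max j M₁ : ℕ):ℝ)+1 := by
          have : (M₁:ℝ) ≤ ((max j M₁ : ℕ):ℝ) := Nat.cast_le.mpr (le_max_right j M₁)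
          linarith
        nlinarith
    have h1 : Tendsto (fun m => mu (g m)) atTop (𝓝 (mu (⋃ m, g m))) :=
      tendsto_measure_iUnion_atTop hg_mono
    have h2 : mu (⋃ m, g m) = 1 := by
      rw [hg_union, measure_compl (measurableSet_singleton 0) (measure_ne_top mu _),
        hzero_u, measure_univ, tsub_zero]
    obtain ⟨N, hN⟩ : ∃ N, 1 - ε ≤ mu (g N) := by
      rw [h2] at h1
      have hev := h1.eventually
        (lt_mem_nhds (show 1 - ε < 1 from ENNReal.sub_lt_self ENNReal.one_ne_top one_ne_zero hε.ne'))
      exact hev.exists.imp fun N h => h.le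
    -- constants
    have hrne : (Finset.range (N+1)).Nonempty := Finset.nonempty_range_add_one
    set d : ℝ := (Finset.range (N+1)).inf' hrne (fun j => ‖∏ i ∈ Finset.Ioc 0 j, u i‖)
      with hddef
    have hd_pos : 0 < d := by
      rw [hddef, Finset.lt_inf'_iff]
      exact fun i _ => hβu_pos i
    have hd_le : ∀ j, j ≤ N → d ≤ ‖∏ i ∈ Finset.Ioc 0 j, u i‖ := by
      intro j hj
      rw [hddef]
      exact Finset.inf'_le _ (Finset.mem_range.mpr (Nat.lt_succ_of_le hj))
    set D : ℝ := (Finset.range (N+1)).sup' hrne (fun j => ‖∏ i ∈ Finset.Ioc 0 j, v i‖)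
      with hDdef
    have hD_le : ∀ j, j ≤ N → ‖∏ i ∈ Finset.Ioc 0 j, v i‖ ≤ D := by
      intro j hj
      rw [hDdef]
      exact Finset.le_sup' (fun j => ‖∏ i ∈ Finset.Ioc 0 j, v i‖)
        (Finset.mem_range.mpr (Nat.lt_succ_of_le hj))
    have hD_pos : 0 < D := lt_of_lt_of_le (hβv_pos 0) (hD_le 0 (Nat.zero_le N))
    set C : ℝ := (max 1 (Mu/cv))^N with hCdef
    have hC1 : (1:ℝ) ≤ C := one_le_pow₀ (le_max_left _ _)
    have hC_pos : (0:ℝ) < C := lt_of_lt_of_le one_pos hC1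
    have hMC : ∀ j, j ≤ N → Mu^j ≤ C * cv^j := by
      intro j hj
      have h1 : Mu^j = (Mu/cv)^j * cv^j := by
        rw [div_pow, div_mul_cancel₀]
        positivity
      rw [h1]
      have h2 : (Mu/cv)^j ≤ (max 1 (Mu/cv))^j :=
        pow_le_pow_left₀ (by positivity) (le_max_right _ _) j
      have h3 : (max 1 (Mu/cv))^j ≤ C := by
        rw [hCdef]
        exact pow_le_pow_right₀ (le_max_left _ _) hj
      exact mul_le_mul_of_nonneg_right (h2.trans h3) (by positivity)
    -- threshold sets
    set H : ℕ → Set (lp (fun _ : ℕ => 𝕂) p) :=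
      fun R => {y | ∃ j ≤ N, (R:ℝ) ≤ ‖(y : ∀ _ : ℕ, 𝕂) j‖} with hHdef
    have hH_meas : ∀ R, MeasurableSet (H R) := fun R => meas_H N _
    have hH_anti : Antitone H := by
      intro R R' hRR' y hy
      obtain ⟨j, hj, h⟩ := hy
      exact ⟨j, hj, le_trans (Nat.cast_le.mpr hRR') h⟩
    have hH_empty : (⋂ R, H R) = ∅ := by
      ext y
      simp only [Set.mem_iInter, Set.mem_empty_iff_false, iff_false, hHdef, Set.mem_setOf_eq]
      intro hall
      obtain ⟨R, hR⟩ := exists_nat_gt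
        ((Finset.range (N+1)).sup' hrne (fun j => ‖(y : ∀ _ : ℕ, 𝕂) j‖))
      obtain ⟨j, hj, hle⟩ := hall R
      have hc : ‖(y : ∀ _ : ℕ, 𝕂) j‖ ≤
          (Finset.range (N+1)).sup' hrne (fun j => ‖(y : ∀ _ : ℕ, 𝕂) j‖) :=
        Finset.le_sup' (fun j => ‖(y : ∀ _ : ℕ, 𝕂) j‖)
          (Finset.mem_range.mpr (Nat.lt_succ_of_le hj))
      linarith
    have h4 : Tendsto (fun R => mv (H R)) atTop (𝓝 0) := by
      have ht := tendsto_measure_iInter_atTop (μ := mv)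
        (fun R => (hH_meas R).nullMeasurableSet) hH_anti ⟨0, measure_ne_top mv _⟩
      rw [hH_empty] at ht
      simpa [Function.comp_def] using ht
    have hRk : ∀ k : ℕ, ∃ R : ℕ, 1 ≤ R ∧ mv (H R) ≤ (2:ℝ≥0∞)⁻¹ ^ k := by
      intro k
      have hpos : (0:ℝ≥0∞) < 2⁻¹ ^ k :=
        pos_iff_ne_zero.mpr (pow_ne_zero _ (by simp))
      have h5 : ∀ᶠ R : ℕ in atTop, mv (H R) < (2:ℝ≥0∞)⁻¹ ^ k :=
        h4.eventually (gt_mem_nhds hpos)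
      obtain ⟨R, hR1, hR2⟩ := (h5.and (eventually_ge_atTop 1)).exists
      exact ⟨R, hR2, hR1.le⟩
    choose R hR1 hR2 using hRk
    -- choose n_k
    have hnk0 : ∀ k : ℕ, ∃ n : ℕ,
        ‖∏ i ∈ Finset.Ioc 0 n, u i‖ * (((R k):ℝ) * C * D)
          ≤ ‖∏ i ∈ Finset.Ioc 0 n, v i‖ * ((1/((N:ℝ)+1)) * d) := by
      intro k
      have hRkpos : (0:ℝ) < (R k : ℝ) := by
        have := hR1 k
        exact_mod_cast Nat.lt_of_lt_of_le Nat.zero_lt_one this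
      have hpos : (0:ℝ) < ((1/((N:ℝ)+1)) * d) / ((R k : ℝ) * C * D) := by positivity
      obtain ⟨n, hn⟩ := hsmall _ hpos
      refine ⟨n, ?_⟩
      rw [div_mul_eq_mul_div, lt_div_iff₀ (by positivity)] at hn
      nlinarith [hn]
    choose nk hnk using hnk0
    -- the sets
    set S : ℕ → Set (lp (fun _ : ℕ => 𝕂) p) := fun k => (⇑(Bu ^ (nk k))) ⁻¹' (g N) with hSdef
    set F : ℕ → Set (lp (fun _ : ℕ => 𝕂) p) := fun k => (⇑(Bv ^ (nk k))) ⁻¹' (H (R k))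
      with hFdef
    have hS_meas : ∀ k, MeasurableSet (S k) := fun k =>
      (Bu ^ (nk k)).continuous.measurable (hg_meas N)
    have hF_meas : ∀ k, MeasurableSet (F k) := fun k =>
      (Bv ^ (nk k)).continuous.measurable (hH_meas (R k))
    set A : Set (lp (fun _ : ℕ => 𝕂) p) := ⋂ K, ⋃ k, ⋃ (_ : K ≤ k), S k with hAdef
    have hA_meas : MeasurableSet A :=
      .iInter fun K => .iUnion fun k => .iUnion fun _ => hS_meas k
    -- mu A is large
    have hmuS : ∀ k, 1 - ε ≤ mu (S k) := by
      intro k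
      rw [hSdef]
      rw [inv_pow_meas hmu (nk k) (hg_meas N)]
      exact hN
    have hU_anti : Antitone (fun K => ⋃ k, ⋃ (_ : K ≤ k), S k) := by
      intro K K' hKK' x hx
      simp only [Set.mem_iUnion] at hx ⊢
      obtain ⟨k, hk, h⟩ := hx
      exact ⟨k, hKK'.trans hk, h⟩
    have hmuA : 1 - ε ≤ mu A := by
      have ht := tendsto_measure_iInter_atTop (μ := mu)
        (fun K => (MeasurableSet.iUnion fun k =>
          MeasurableSet.iUnion fun _ => hS_meas k).nullMeasurableSet)
        hU_anti ⟨0, measure_ne_top mu _⟩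
      refine ge_of_tendsto ht (Eventually.of_forall fun K => ?_)
      refine le_trans (hmuS K) (measure_mono ?_)
      intro x hx
      simp only [Set.mem_iUnion]
      exact ⟨K, le_refl K, hx⟩
    -- key inclusion
    have hincl : A ⊆ ⋂ K, ⋃ k, ⋃ (_ : K ≤ k), F k := by
      intro x hx
      refine Set.mem_iInter.mpr fun K => ?_
      have hxK := Set.mem_iInter.mp hx K
      simp only [Set.mem_iUnion] at hxK ⊢
      obtain ⟨k, hKk, hxS⟩ := hxK
      refine ⟨k, hKk, ?_⟩
      -- unfold membership
      rw [hSdef] at hxS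
      simp only [Set.mem_preimage, hgdef, Set.mem_setOf_eq] at hxS
      obtain ⟨j, hjN, hδle⟩ := hxS
      rw [hFdef]
      simp only [Set.mem_preimage, hHdef, Set.mem_setOf_eq]
      refine ⟨j, hjN, ?_⟩
      set n := nk k with hndef
      have hcu := pow_apply_coord u Bu hBu n x j
      have hcv2 := pow_apply_coord v Bv hBv n x j
      rw [hcv2, norm_mul]
      rw [hcu, norm_mul] at hδle
      -- product identities
      have ePu : ‖∏ i ∈ Finset.Ioc 0 j, u i‖ * ‖∏ i ∈ Finset.Ioc j (j+n), u i‖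
          = ‖∏ i ∈ Finset.Ioc 0 n, u i‖ * ‖∏ i ∈ Finset.Ioc n (n+j), u i‖ := by
        rw [← norm_mul, ← norm_mul,
          Finset.prod_Ioc_consecutive u (Nat.zero_le j) (Nat.le_add_right j n),
          Finset.prod_Ioc_consecutive u (Nat.zero_le n) (Nat.le_add_right n j),
          Nat.add_comm j n]
      have ePv : ‖∏ i ∈ Finset.Ioc 0 j, v i‖ * ‖∏ i ∈ Finset.Ioc j (j+n), v i‖
          = ‖∏ i ∈ Finset.Ioc 0 n, v i‖ * ‖∏ i ∈ Finset.Ioc n (n+j), v i‖ := by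
        rw [← norm_mul, ← norm_mul,
          Finset.prod_Ioc_consecutive v (Nat.zero_le j) (Nat.le_add_right j n),
          Finset.prod_Ioc_consecutive v (Nat.zero_le n) (Nat.le_add_right n j),
          Nat.add_comm j n]
      -- the ratio bound
      have hcard : (Finset.Ioc n (n+j)).card = j := by
        rw [Nat.card_Ioc]; omega
      have heu_le : ‖∏ i ∈ Finset.Ioc n (n+j), u i‖ ≤ Mu^j := by
        rw [norm_prod]
        calc ∏ i ∈ Finset.Ioc n (n+j), ‖u i‖ ≤ ∏ _i ∈ Finset.Ioc n (n+j), Mu :=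
              Finset.prod_le_prod (fun i _ => norm_nonneg _) (fun i _ => hMu i)
          _ = Mu^j := by rw [Finset.prod_const, hcard]
      have hev_ge : cv^j ≤ ‖∏ i ∈ Finset.Ioc n (n+j), v i‖ := by
        rw [norm_prod]
        calc cv^j = ∏ _i ∈ Finset.Ioc n (n+j), cv := by rw [Finset.prod_const, hcard]
          _ ≤ ∏ i ∈ Finset.Ioc n (n+j), ‖v i‖ :=
              Finset.prod_le_prod (fun i _ => hcv0.le)
                (fun i hi => hcv i (by have := (Finset.mem_Ioc.mp hi).1; omega))
      have hCe : ‖∏ i ∈ Finset.Ioc n (n+j), u i‖ ≤ C * ‖∏ i ∈ Finset.Ioc n (n+j), v i‖ :=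
        le_trans (heu_le.trans (hMC j hjN))
          (mul_le_mul_of_nonneg_left hev_ge hC_pos.le)
      have hRkpos : (0:ℝ) < (R k : ℝ) := by
        have := hR1 k
        exact_mod_cast Nat.lt_of_lt_of_le Nat.zero_lt_one this
      exact helper_ineq (1/((N:ℝ)+1)) ((R k : ℝ)) (‖(x : ∀ _ : ℕ, 𝕂) (j+n)‖)
        (‖∏ i ∈ Finset.Ioc 0 n, u i‖) (‖∏ i ∈ Finset.Ioc 0 n, v i‖)
        (‖∏ i ∈ Finset.Ioc n (n+j), u i‖) (‖∏ i ∈ Finset.Ioc n (n+j), v i‖)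
        (‖∏ i ∈ Finset.Ioc j (j+n), u i‖) (‖∏ i ∈ Finset.Ioc j (j+n), v i‖)
        (‖∏ i ∈ Finset.Ioc 0 j, u i‖) (‖∏ i ∈ Finset.Ioc 0 j, v i‖)
        d D C (by positivity) hRkpos (norm_nonneg _) (hβu_pos n) (hβv_pos n)
        (hβu_pos j) (hβv_pos j) (hd_le j hjN) (hD_le j hjN) hC_pos hCe ePu ePv
        (hnk k) hδle
    -- mv A = 0
    have hmvF : ∀ k, mv (F k) ≤ (2:ℝ≥0∞)⁻¹ ^ k := by
      intro k
      rw [hFdef]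
      rw [inv_pow_meas hmv (nk k) (hH_meas (R k))]
      exact hR2 k
    have hmvA : mv A = 0 := by
      have hbound : ∀ K : ℕ, mv A ≤ (2:ℝ≥0∞)⁻¹ ^ K * 2 := by
        intro K
        have hsub : A ⊆ ⋃ i : ℕ, F (K + i) := by
          intro x hx
          have hxK := Set.mem_iInter.mp (hincl hx) K
          simp only [Set.mem_iUnion] at hxK ⊢
          obtain ⟨k, hKk, h⟩ := hxK
          exact ⟨k - K, by rwa [Nat.add_sub_cancel' hKk]⟩
        calc mv A ≤ mv (⋃ i : ℕ, F (K+i)) := measure_mono hsub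
          _ ≤ ∑' i : ℕ, mv (F (K+i)) := measure_iUnion_le _
          _ ≤ ∑' i : ℕ, (2:ℝ≥0∞)⁻¹^(K+i) := ENNReal.tsum_le_tsum fun i => hmvF (K+i)
          _ = (2:ℝ≥0∞)⁻¹^K * ∑' i : ℕ, (2:ℝ≥0∞)⁻¹^i := by
              simp [pow_add, ENNReal.tsum_mul_left]
          _ = (2:ℝ≥0∞)⁻¹^K * 2 := by
              rw [ENNReal.tsum_geometric, ENNReal.one_sub_inv_two, inv_inv]
      have htend : Tendsto (fun K : ℕ => (2:ℝ≥0∞)⁻¹^K * 2) atTop (𝓝 0) := by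
        have h := ENNReal.tendsto_pow_atTop_nhds_zero_of_lt_one
          (show (2:ℝ≥0∞)⁻¹ < 1 by simp [ENNReal.inv_lt_one])
        have h2 := ENNReal.Tendsto.mul_const h (Or.inr (by norm_num : (2:ℝ≥0∞) ≠ ⊤))
        simpa using h2
      exact le_antisymm (ge_of_tendsto htend (Eventually.of_forall hbound)) zero_le
    exact ⟨A, hA_meas, hmuA, hmvA⟩
  -- assembly
  have key2 : ∀ m : ℕ, ∃ A : Set (lp (fun _ : ℕ => 𝕂) p),
      MeasurableSet A ∧ 1 - (2:ℝ≥0∞)⁻¹^(m+1) ≤ mu A ∧ mv A = 0 := by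
    intro m
    apply key
    · exact pos_iff_ne_zero.mpr (pow_ne_zero _ (by simp))
    · have h1 : (2:ℝ≥0∞)⁻¹ < 1 := by simp [ENNReal.inv_lt_one]
      calc (2:ℝ≥0∞)⁻¹^(m+1) = 2⁻¹ * 2⁻¹^m := pow_succ' _ _
        _ ≤ 2⁻¹ * 1 := mul_le_mul_right
            (pow_le_one₀ zero_le (by simp [ENNReal.inv_le_one])) _
        _ < 1 := by rw [mul_one]; exact h1
  choose A hA1 hA2 hA3 using key2
  refine ⟨(⋃ m, A m)ᶜ, (MeasurableSet.iUnion hA1).compl, ?_, ?_⟩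
  · have hb : ∀ m : ℕ, mu (⋃ m, A m)ᶜ ≤ (2:ℝ≥0∞)⁻¹^(m+1) := by
      intro m
      have hle1 : (2:ℝ≥0∞)⁻¹^(m+1) ≤ 1 := by
        apply pow_le_one₀ zero_le
        simp [ENNReal.inv_le_one]
      calc mu (⋃ m, A m)ᶜ ≤ mu (A m)ᶜ :=
            measure_mono (Set.compl_subset_compl.mpr (Set.subset_iUnion A m))
        _ = 1 - mu (A m) := by
            rw [measure_compl (hA1 m) (measure_ne_top _ _), measure_univ]
        _ ≤ 1 - (1 - (2:ℝ≥0∞)⁻¹^(m+1)) := tsub_le_tsub le_rfl (hA2 m)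
        _ = (2:ℝ≥0∞)⁻¹^(m+1) := ENNReal.sub_sub_cancel ENNReal.one_ne_top hle1
    have htend : Tendsto (fun m : ℕ => (2:ℝ≥0∞)⁻¹^(m+1)) atTop (𝓝 0) := by
      have h := ENNReal.tendsto_pow_atTop_nhds_zero_of_lt_one
        (show (2:ℝ≥0∞)⁻¹ < 1 by simp [ENNReal.inv_lt_one])
      exact h.comp (tendsto_add_atTop_nat 1)
    exact le_antisymm (ge_of_tendsto htend (Eventually.of_forall hb)) zero_le
  · rw [compl_compl]
    exact measure_iUnion_null hA3

end OrthoShift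

/-- If the weights `u`, `v` are bounded below and `B_u`, `B_v` are not similar
(i.e. `liminf |u₁⋯u_n/(v₁⋯v_n)| = 0` or `limsup |u₁⋯u_n/(v₁⋯v_n)| = ∞`), then `B_u` and `B_v`
are orthogonal: invariant probability measures not charging `{0}` are mutually singular. -/
theorem orthogonal_of_not_similar_of_bddBelow
    {𝕂 : Type*} [RCLike 𝕂] (p : ℝ≥0∞) [Fact (1 ≤ p)] (hp : p ≠ ⊤)
    (u v : ℕ → 𝕂) (hu0 : ∀ n, 1 ≤ n → u n ≠ 0) (hv0 : ∀ n, 1 ≤ n → v n ≠ 0)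
    (hubdd : ∃ M : ℝ, ∀ n, ‖u n‖ ≤ M) (hvbdd : ∃ M : ℝ, ∀ n, ‖v n‖ ≤ M)
    (hubelow : ∃ c : ℝ, 0 < c ∧ ∀ n, 1 ≤ n → c ≤ ‖u n‖)
    (hvbelow : ∃ c : ℝ, 0 < c ∧ ∀ n, 1 ≤ n → c ≤ ‖v n‖)
    (Bu Bv : lp (fun _ : ℕ => 𝕂) p →L[𝕂] lp (fun _ : ℕ => 𝕂) p)
    (hBu : ∀ (x : lp (fun _ : ℕ => 𝕂) p) (n : ℕ),
        (Bu x : ∀ _ : ℕ, 𝕂) n = u (n + 1) * (x : ∀ _ : ℕ, 𝕂) (n + 1))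
    (hBv : ∀ (x : lp (fun _ : ℕ => 𝕂) p) (n : ℕ),
        (Bv x : ∀ _ : ℕ, 𝕂) n = v (n + 1) * (x : ∀ _ : ℕ, 𝕂) (n + 1))
    (hnotsim :
      (∀ ε : ℝ, 0 < ε → ∃ᶠ n in atTop,
          ‖∏ i ∈ Finset.Icc 1 n, u i‖ / ‖∏ i ∈ Finset.Icc 1 n, v i‖ < ε) ∨
      (∀ M : ℝ, ∃ᶠ n in atTop,
          M < ‖∏ i ∈ Finset.Icc 1 n, u i‖ / ‖∏ i ∈ Finset.Icc 1 n, v i‖))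
    (mu mv : Measure (lp (fun _ : ℕ => 𝕂) p))
    [IsProbabilityMeasure mu] [IsProbabilityMeasure mv]
    (hmu : ∀ A : Set (lp (fun _ : ℕ => 𝕂) p), MeasurableSet A → mu (Bu ⁻¹' A) = mu A)
    (hmv : ∀ A : Set (lp (fun _ : ℕ => 𝕂) p), MeasurableSet A → mv (Bv ⁻¹' A) = mv A)
    (hzero_u : mu {0} = 0) (hzero_v : mv {0} = 0) :
    mu.MutuallySingular mv := by
  have hIcc : ∀ n : ℕ, Finset.Icc 1 n = Finset.Ioc 0 n := fun n => Finset.Icc_add_one_left_eq_Ioc 0 n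
  have hβu_pos : ∀ n, (0:ℝ) < ‖∏ i ∈ Finset.Ioc 0 n, u i‖ := by
    intro n
    rw [norm_pos_iff]
    exact Finset.prod_ne_zero_iff.mpr fun i hi => hu0 i (Finset.mem_Ioc.mp hi).1
  have hβv_pos : ∀ n, (0:ℝ) < ‖∏ i ∈ Finset.Ioc 0 n, v i‖ := by
    intro n
    rw [norm_pos_iff]
    exact Finset.prod_ne_zero_iff.mpr fun i hi => hv0 i (Finset.mem_Ioc.mp hi).1
  rcases hnotsim with h | h
  · refine OrthoShift.aux u v hu0 hv0 hubdd hvbelow Bu Bv hBu hBv ?_ mu mv hmu hmv hzero_u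
    intro ε hε
    obtain ⟨n, hn⟩ := (h ε hε).exists
    simp only [hIcc] at hn
    rw [div_lt_iff₀ (hβv_pos n)] at hn
    exact ⟨n, hn⟩
  · refine (OrthoShift.aux v u hv0 hu0 hvbdd hubelow Bv Bu hBv hBu ?_ mv mu hmv hmu
      hzero_v).symm
    intro ε hε
    obtain ⟨n, hn⟩ := (h ε⁻¹).exists
    simp only [hIcc] at hn
    have h2 : ε⁻¹ * ‖∏ i ∈ Finset.Ioc 0 n, v i‖ < ‖∏ i ∈ Finset.Ioc 0 n, u i‖ :=
      (lt_div_iff₀ (hβv_pos n)).mp hn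
    refine ⟨n, ?_⟩
    have h3 := mul_lt_mul_of_pos_left h2 hε
    rw [← mul_assoc, mul_inv_cancel₀ hε.ne', one_mul] at h3
    exact h3
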